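/- Let f(z) = t_2 z² + t_1 z + t_0 with t_0, t_1, t_2 > 0, and set τ_0 = t_0/t_2, τ_1 = t_1/t_2. Then f has at least one root on the unit circle if and only if (τ_0 = 1 and τ_1 ≤ 2) or (τ_1 = τ_0 + 1). -/

import Mathlib

open Complex

/-- **Critical lines of the quadratic model.** For `f(z) = t₂ z² + t₁ z + t₀` with
`t₀, t₁, t₂ > 0` and `τ₀ = t₀/t₂`, `τ₁ = t₁/t₂`, `f` has a root on the unit circle
if and only if (`τ₀ = 1` and `τ₁ ≤ 2`) or `τ₁ = τ₀ + 1`. -/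
theorem stmt12 (t0 t1 t2 : ℝ) (h0 : 0 < t0) (h1 : 0 < t1) (h2 : 0 < t2) :
    (∃ z : ℂ, ‖z‖ = 1 ∧ (t2 : ℂ) * z ^ 2 + (t1 : ℂ) * z + (t0 : ℂ) = 0)
      ↔ ((t0 / t2 = 1 ∧ t1 / t2 ≤ 2) ∨ t1 / t2 = t0 / t2 + 1) := by
  constructor
  · rintro ⟨z, hz, heq⟩
    have hn : z.re ^ 2 + z.im ^ 2 = 1 := by
      have h := Complex.sq_norm z
      rw [hz] at h
      simpa [Complex.normSq_apply, sq] using h.symm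
    have hre := congrArg Complex.re heq
    have him := congrArg Complex.im heq
    simp [pow_two, Complex.mul_re, Complex.mul_im, Complex.add_re, Complex.add_im,
      Complex.ofReal_re, Complex.ofReal_im] at hre him
    rcases eq_or_ne z.im 0 with hy | hy
    · right
      rw [hy] at hre hn
      have hx : z.re * z.re = 1 := by nlinarith
      rcases mul_self_eq_one_iff.mp hx with hx1 | hx1
      · rw [hx1] at hre; nlinarith
      · rw [hx1] at hre
        field_simp
        linarith
    · have h2x : 2 * t2 * z.re + t1 = 0 := by
        have h' : z.im * (2 * t2 * z.re + t1) = 0 := by linear_combination him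
        rcases mul_eq_zero.mp h' with h'' | h''
        · exact absurd h'' hy
        · exact h''
      left
      constructor
      · rw [div_eq_one_iff_eq h2.ne']
        linear_combination hre + t2 * hn - z.re * h2x
      · rw [div_le_iff₀ h2]
        nlinarith [sq_nonneg (1 + z.re), sq_nonneg z.im]
  · rintro (⟨ha, hb⟩ | h)
    · have ht0 : t0 = t2 := by
        rwa [div_eq_one_iff_eq h2.ne'] at ha
      have ht1 : t1 ≤ 2 * t2 := by
        have := (div_le_iff₀ h2).mp hb; linarith
      set x : ℝ := -t1 / (2 * t2) with hxdef
      have h2x : 2 * t2 * x + t1 = 0 := by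
        rw [hxdef]; field_simp; ring
      have hx2 : x ^ 2 ≤ 1 := by
        rw [hxdef, div_pow, div_le_one (by positivity)]
        nlinarith
      set y : ℝ := Real.sqrt (1 - x ^ 2) with hydef
      have hy : y ^ 2 = 1 - x ^ 2 := Real.sq_sqrt (by linarith)
      refine ⟨x + y * Complex.I, ?_, ?_⟩
      · have : ‖(x + y * Complex.I : ℂ)‖ ^ 2 = 1 := by
          rw [Complex.sq_norm, Complex.normSq_add_mul_I]
          linarith
        nlinarith [norm_nonneg (x + y * Complex.I : ℂ)]
      · apply Complex.ext
        · simp [pow_two, Complex.mul_re, Complex.mul_im, Complex.add_re, Complex.add_im]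
          linear_combination x * h2x - t2 * hy + ht0
        · simp [pow_two, Complex.mul_re, Complex.mul_im, Complex.add_re, Complex.add_im]
          linear_combination y * h2x
    · have ht : t1 = t0 + t2 := by
        field_simp at h; linarith
      refine ⟨-1, by simp, ?_⟩
      have ht' : (t1 : ℂ) = (t0 : ℂ) + (t2 : ℂ) := by exact_mod_cast ht
      linear_combination -ht'
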